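/- Let m ≥ 1 and let d_A, d_B be integers with 1 ≤ d_A, d_B ≤ q^m. Let A, B ⊆ {0,…,q-1}^m be the exponent sets defining Hyp_q(d_A,m) and Hyp_q(d_B,m), and let A + B = {a + b : a ∈ A, b ∈ B} denote their Minkowski sum. Then the F_q-span of the evaluation vectors ev(X^c), c ∈ A + B, is contained in Hyp_q(d_A + d_B - q^m, m) (where Hyp_q(d,m) with d ≤ 1 is all of F_q^n). -/

import Mathlib

open MvPolynomial Finset Pointwise

noncomputable section

/-- Evaluation of a multivariate polynomial at all points of `F^m`. -/
def evalPt {F : Type} [Field F] {m : ℕ} (f : MvPolynomial (Fin m) F) : (Fin m → F) → F :=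
  fun P => MvPolynomial.eval P f

/-- The monomial code `C_A = ev(F_q[A])`, the evaluations of the polynomials
whose monomial support is contained in `A`. -/
def monomialCode (F : Type) [Field F] (m : ℕ) (A : Set (Fin m →₀ ℕ)) :
    Set ((Fin m → F) → F) :=
  { v | ∃ f : MvPolynomial (Fin m) F, (↑f.support : Set (Fin m →₀ ℕ)) ⊆ A ∧ v = evalPt f }

/-- Exponent set of the Reed–Muller code `RM_q(s,m)` (empty when `s < 0`). -/
def RMset (q m : ℕ) (s : ℤ) : Set (Fin m →₀ ℕ) :=
  { i | (∀ j, i j < q) ∧ (∑ j, (i j : ℤ)) ≤ s }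

/-- Exponent set of the hyperbolic code `Hyp_q(d,m)`. -/
def Hypset (q m d : ℕ) : Set (Fin m →₀ ℕ) :=
  { i | (∀ j, i j < q) ∧ d ≤ ∏ j, (q - i j) }

/-- Exponent set of the cube code `Cube_q(s,m)`. -/
def Cubeset (m s : ℕ) : Set (Fin m →₀ ℕ) :=
  { i | ∀ j, i j ≤ s }

/-- Minimum distance of a code: least Hamming weight of a nonzero codeword. -/
def minDist {F : Type} [Field F] [Fintype F] [DecidableEq F] {m : ℕ}
    (C : Set ((Fin m → F) → F)) : ℕ :=
  sInf { w | ∃ v ∈ C, v ≠ 0 ∧ hammingNorm v = w }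

/-- Hamming distance from a word to a code. -/
def distToCode {F : Type} [Field F] [Fintype F] [DecidableEq F] {m : ℕ}
    (y : (Fin m → F) → F) (C : Set ((Fin m → F) → F)) : ℕ :=
  sInf { w | ∃ c ∈ C, hammingDist y c = w }

/-- `i`-fold Minkowski sum of `H` with itself (`0`-fold sum is `{0}`). -/
def iMink {m : ℕ} (H : Set (Fin m →₀ ℕ)) : ℕ → Set (Fin m →₀ ℕ)
  | 0 => {0}
  | i + 1 => iMink H i + H

/-- The sets `L(d,r,i)` from the Geil–Matsumoto list-decoding algorithm. -/
def Lset (q m d r i : ℕ) : Set (Fin m →₀ ℕ) :=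
  { a | (∀ j, a j < q) ∧ ∀ x ∈ iMink (Hypset q m d) i, a + x ∈ Hypset q m (r + 1) }

/-- Key two-term inequality over the integers. -/
lemma key16 (N M x y X Y z Z : ℤ) (hx1 : 1 ≤ x) (hxN : x ≤ N) (hy1 : 1 ≤ y) (hyN : y ≤ N)
    (hX1 : 1 ≤ X) (hXM : X ≤ M) (hY1 : 1 ≤ Y) (hYM : Y ≤ M)
    (hz1 : 1 ≤ z) (hz2 : x + y - N ≤ z) (hZ1 : 1 ≤ Z) (hZ2 : X + Y - M ≤ Z) :
    x * X + y * Y - N * M ≤ z * Z := by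
  rcases le_or_gt (x + y) (N + 1) with h | h
  · have h1 : x * X + y * Y - N * M ≤ X + Y - M := by
      nlinarith [mul_nonneg (by linarith : (0:ℤ) ≤ M - X) (by linarith : (0:ℤ) ≤ x - 1),
        mul_nonneg (by linarith : (0:ℤ) ≤ M - Y) (by linarith : (0:ℤ) ≤ y - 1),
        mul_nonneg (by linarith : (0:ℤ) ≤ N - (x + y - 1)) (by linarith : (0:ℤ) ≤ M)]
    nlinarith [mul_nonneg (by linarith : (0:ℤ) ≤ z - 1) (by linarith : (0:ℤ) ≤ Z)]
  rcases le_or_gt (X + Y) (M + 1) with h' | h'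
  · have h1 : x * X + y * Y - N * M ≤ x + y - N := by
      nlinarith [mul_nonneg (by linarith : (0:ℤ) ≤ N - x) (by linarith : (0:ℤ) ≤ X - 1),
        mul_nonneg (by linarith : (0:ℤ) ≤ N - y) (by linarith : (0:ℤ) ≤ Y - 1),
        mul_nonneg (by linarith : (0:ℤ) ≤ M - (X + Y - 1)) (by linarith : (0:ℤ) ≤ N)]
    nlinarith [mul_nonneg (by linarith : (0:ℤ) ≤ Z - 1) (by linarith : (0:ℤ) ≤ z)]
  · have hmul : (x + y - N) * (X + Y - M) ≤ z * Z :=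
      mul_le_mul hz2 hZ2 (by linarith) (by linarith)
    nlinarith [mul_nonneg (by linarith : (0:ℤ) ≤ N - x) (by linarith : (0:ℤ) ≤ M - Y),
      mul_nonneg (by linarith : (0:ℤ) ≤ N - y) (by linarith : (0:ℤ) ≤ M - X)]

/-- Product form of the key inequality. -/
lemma prod16 {ι : Type*} (N : ℤ) (x y z : ι → ℤ) (s : Finset ι)
    (hx : ∀ i ∈ s, 1 ≤ x i ∧ x i ≤ N) (hy : ∀ i ∈ s, 1 ≤ y i ∧ y i ≤ N)
    (hz : ∀ i ∈ s, 1 ≤ z i ∧ x i + y i - N ≤ z i) :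
    (∏ i ∈ s, x i) + (∏ i ∈ s, y i) - N ^ s.card ≤ ∏ i ∈ s, z i := by
  induction s using Finset.cons_induction with
  | empty => simp
  | cons a s ha ih =>
    simp only [Finset.prod_cons, Finset.card_cons, pow_succ']
    have hX1 : 1 ≤ ∏ i ∈ s, x i := by
      calc (1:ℤ) = ∏ i ∈ s, 1 := by simp
      _ ≤ ∏ i ∈ s, x i := Finset.prod_le_prod (by simp)
            (fun i hi => (hx i (Finset.mem_cons_of_mem hi)).1)
    have hY1 : 1 ≤ ∏ i ∈ s, y i := by
      calc (1:ℤ) = ∏ i ∈ s, 1 := by simp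
      _ ≤ ∏ i ∈ s, y i := Finset.prod_le_prod (by simp)
            (fun i hi => (hy i (Finset.mem_cons_of_mem hi)).1)
    have hZ1 : 1 ≤ ∏ i ∈ s, z i := by
      calc (1:ℤ) = ∏ i ∈ s, 1 := by simp
      _ ≤ ∏ i ∈ s, z i := Finset.prod_le_prod (by simp)
            (fun i hi => (hz i (Finset.mem_cons_of_mem hi)).1)
    have hXM : ∏ i ∈ s, x i ≤ N ^ s.card := by
      calc ∏ i ∈ s, x i ≤ ∏ i ∈ s, N := Finset.prod_le_prod
            (fun i hi => by linarith [(hx i (Finset.mem_cons_of_mem hi)).1])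
            (fun i hi => (hx i (Finset.mem_cons_of_mem hi)).2)
      _ = N ^ s.card := by rw [Finset.prod_const]
    have hYM : ∏ i ∈ s, y i ≤ N ^ s.card := by
      calc ∏ i ∈ s, y i ≤ ∏ i ∈ s, N := Finset.prod_le_prod
            (fun i hi => by linarith [(hy i (Finset.mem_cons_of_mem hi)).1])
            (fun i hi => (hy i (Finset.mem_cons_of_mem hi)).2)
      _ = N ^ s.card := by rw [Finset.prod_const]
    have hm : a ∈ Finset.cons a s ha := Finset.mem_cons_self a s
    exact key16 N (N ^ s.card) (x a) (y a) (∏ i ∈ s, x i) (∏ i ∈ s, y i) (z a) (∏ i ∈ s, z i)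
      (hx a hm).1 (hx a hm).2 (hy a hm).1 (hy a hm).2 hX1 hXM hY1 hYM
      (hz a hm).1 (hz a hm).2 hZ1
      (ih (fun i hi => hx i (Finset.mem_cons_of_mem hi))
          (fun i hi => hy i (Finset.mem_cons_of_mem hi))
          (fun i hi => hz i (Finset.mem_cons_of_mem hi)))

/-- Reduce an exponent modulo evaluation on `F_q`. -/
def red16 (q e : ℕ) : ℕ := if e = 0 then 0 else (e - 1) % (q - 1) + 1

lemma red16_le (q e : ℕ) : red16 q e ≤ e := by
  unfold red16; split
  · omega
  · have := Nat.mod_le (e - 1) (q - 1); omega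

lemma red16_lt (q e : ℕ) (hq : 2 ≤ q) : red16 q e < q := by
  unfold red16; split
  · omega
  · have : (e - 1) % (q - 1) < q - 1 := Nat.mod_lt _ (by omega)
    omega

lemma pow_red16 {F : Type} [Field F] [Fintype F] (q : ℕ) (hq : Fintype.card F = q)
    (a : F) (e : ℕ) : a ^ red16 q e = a ^ e := by
  unfold red16
  split
  · next h => subst h; rfl
  · next h =>
    have hkey : e = ((e - 1) % (q - 1) + 1) + (q - 1) * ((e - 1) / (q - 1)) := by
      have := Nat.mod_add_div (e - 1) (q - 1); omega
    rcases eq_or_ne a 0 with rfl | ha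
    · rw [zero_pow (by omega), zero_pow h]
    · have h2 : a ^ e = a ^ ((e - 1) % (q - 1) + 1) * (a ^ (q - 1)) ^ ((e - 1) / (q - 1)) := by
        rw [← pow_mul, ← pow_add, ← hkey]
      rw [h2, ← hq, FiniteField.pow_card_sub_one_eq_one a ha, one_pow, mul_one]

/-- the span of the evaluations of the monomials `X^c`, `c` in the Minkowski
sum of the exponent sets of `Hyp_q(d_A,m)` and `Hyp_q(d_B,m)`, is contained in
`Hyp_q(d_A + d_B - q^m, m)`. -/
theorem statement16 (F : Type) [Field F] [Fintype F] [DecidableEq F]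
    (q m dA dB : ℕ) (hq : Fintype.card F = q) (hm : 1 ≤ m)
    (hdA1 : 1 ≤ dA) (hdA2 : dA ≤ q ^ m) (hdB1 : 1 ≤ dB) (hdB2 : dB ≤ q ^ m) :
    (↑(Submodule.span F { v : (Fin m → F) → F |
        ∃ c ∈ Hypset q m dA + Hypset q m dB,
          v = evalPt (MvPolynomial.monomial c (1 : F)) }) : Set ((Fin m → F) → F)) ⊆
      monomialCode F m (Hypset q m (dA + dB - q ^ m)) := by
  have hq2 : 2 ≤ q := by rw [← hq]; exact Fintype.one_lt_card
  set d : ℕ := dA + dB - q ^ m with hd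
  let M : Submodule F ((Fin m → F) → F) :=
    { carrier := monomialCode F m (Hypset q m d)
      zero_mem' := ⟨0, by simp, by funext P; simp [evalPt]⟩
      add_mem' := by
        rintro v w ⟨f, hf, rfl⟩ ⟨g, hg, rfl⟩
        refine ⟨f + g, ?_, ?_⟩
        · refine Set.Subset.trans ?_ (Set.union_subset hf hg)
          have := MvPolynomial.support_add (p := f) (q := g)
          intro i hi
          have : i ∈ f.support ∪ g.support := this hi
          simpa using this
        · funext P; simp [evalPt]
      smul_mem' := by
        rintro r v ⟨f, hf, rfl⟩
        refine ⟨r • f, ?_, ?_⟩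
        · refine Set.Subset.trans ?_ hf
          intro i hi
          have hsub := MvPolynomial.support_smul (a := r) (f := f)
          exact hsub hi
        · funext P; simp [evalPt, MvPolynomial.smul_eval] }
  have hM : monomialCode F m (Hypset q m d) = ↑M := rfl
  rw [hM]
  refine SetLike.coe_subset_coe.2 (Submodule.span_le.2 ?_)
  rintro v ⟨c, hc, rfl⟩
  rw [Set.mem_add] at hc
  obtain ⟨a, ha, b, hb, rfl⟩ := hc
  obtain ⟨ha1, ha2⟩ := ha
  obtain ⟨hb1, hb2⟩ := hb
  set cb : Fin m →₀ ℕ := Finsupp.mapRange (red16 q) (by simp [red16]) (a + b) with hcb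
  have hcbj : ∀ j, cb j = red16 q (a j + b j) := fun j => by
    simp [hcb, Finsupp.mapRange_apply]
  -- the product bound
  have hmem : cb ∈ Hypset q m d := by
    refine ⟨fun j => by rw [hcbj j]; exact red16_lt q _ hq2, ?_⟩
    have key := prod16 (q : ℤ) (fun j => (q : ℤ) - a j) (fun j => (q : ℤ) - b j)
      (fun j => (q : ℤ) - cb j) Finset.univ
      (fun i _ => by have := ha1 i; constructor <;> omega)
      (fun i _ => by have := hb1 i; constructor <;> omega)
      (fun i _ => by
        have h1 : cb i < q := by rw [hcbj i]; exact red16_lt q _ hq2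
        have h2 : cb i ≤ a i + b i := by rw [hcbj i]; exact red16_le q _
        constructor <;> omega)
    have hcard : (Finset.univ : Finset (Fin m)).card = m := by simp
    rw [hcard] at key
    have hca : ((∏ j, (q - a j) : ℕ) : ℤ) = ∏ j, ((q:ℤ) - a j) := by
      rw [Nat.cast_prod]
      exact Finset.prod_congr rfl fun j _ => by rw [Nat.cast_sub (ha1 j).le]
    have hcbI : ((∏ j, (q - b j) : ℕ) : ℤ) = ∏ j, ((q:ℤ) - b j) := by
      rw [Nat.cast_prod]
      exact Finset.prod_congr rfl fun j _ => by rw [Nat.cast_sub (hb1 j).le]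
    have hcc : ((∏ j, (q - cb j) : ℕ) : ℤ) = ∏ j, ((q:ℤ) - cb j) := by
      rw [Nat.cast_prod]
      refine Finset.prod_congr rfl fun j _ => ?_
      have : cb j < q := by rw [hcbj j]; exact red16_lt q _ hq2
      rw [Nat.cast_sub this.le]
    have hqm : ((q ^ m : ℕ) : ℤ) = (q:ℤ) ^ m := by push_cast; ring
    rw [← hca, ← hcbI, ← hcc, ← hqm] at key
    have h1 : (dA : ℤ) ≤ ((∏ j, (q - a j) : ℕ) : ℤ) := by exact_mod_cast ha2
    have h2 : (dB : ℤ) ≤ ((∏ j, (q - b j) : ℕ) : ℤ) := by exact_mod_cast hb2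
    omega
  -- the evaluation equality
  have hev : evalPt ((MvPolynomial.monomial (a + b)) (1:F))
      = evalPt ((MvPolynomial.monomial cb) (1:F)) := by
    funext P
    simp only [evalPt, MvPolynomial.eval_monomial, one_mul]
    rw [Finsupp.prod_fintype _ _ (fun j => pow_zero (P j)),
        Finsupp.prod_fintype _ _ (fun j => pow_zero (P j))]
    exact Finset.prod_congr rfl fun j _ => by rw [hcbj j, pow_red16 q hq, Finsupp.add_apply]
  refine ⟨(MvPolynomial.monomial cb) (1:F), ?_, hev⟩
  rw [MvPolynomial.support_monomial, if_neg one_ne_zero]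
  simpa using hmem
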